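/- Let G be a finite connected undirected graph with positive conductances and marked vertex b, and let u≠b be a vertex. Under the probability measure P on two-component spanning forests proportional to weight, the probability that u lies in the floating component Σ equals (κ(G)/κ₂(G))·G_{u,u}. Equivalently, the sum of the weights of all 2SFs whose floating component contains u equals κ(G)·G_{u,u}. -/

import Mathlib

set_option linter.unusedSectionVars false
set_option linter.unusedVariables false
set_option maxHeartbeats 1000000


open scoped Classical BigOperators

noncomputable section

namespace TwoSF

variable {V : Type*} [Fintype V] [DecidableEq V]

/-- `u` and `v` are linked by the edges in `B`. -/
def Linked (B : Finset (Sym2 V)) : V → V → Prop :=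
  Relation.ReflTransGen fun a b => s(a, b) ∈ B

/-- The number of connected components of the spanning subgraph `(V, B)`. -/
def ncomp (B : Finset (Sym2 V)) : ℕ :=
  Nat.card (Quot (Linked B))

/-- `B` is a spanning forest of the complete graph on `V` with exactly `k`
connected components: it has `k` components and, by the rank count
`|B| + k = |V|`, it is acyclic (in particular it contains no loop edge).
Taking `k = 1` gives spanning trees, `k = 2` gives two-component spanning
forests (2SF). -/
def IsSF (k : ℕ) (B : Finset (Sym2 V)) : Prop :=
  ncomp B = k ∧ B.card + k = Fintype.card V

/-- The weight of an edge set: the product of its conductances. -/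
def wt (c : Sym2 V → ℝ) (B : Finset (Sym2 V)) : ℝ := ∏ e ∈ B, c e

/-- κ: the weighted sum of spanning trees.  Edge sets containing a non-edge
(an `e` with `c e = 0`) contribute weight `0`, so this is the weighted number
of spanning trees of the graph whose edges are the support of `c`. -/
def kappa1 (c : Sym2 V → ℝ) : ℝ := ∑ B ∈ Finset.univ.filter (IsSF 1), wt c B

/-- κ₂: the weighted sum of two-component spanning forests. -/
def kappa2 (c : Sym2 V → ℝ) : ℝ := ∑ B ∈ Finset.univ.filter (IsSF 2), wt c B

/-- The floating component of `B`: the set of vertices not linked to `b`. -/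
def floating (b : V) (B : Finset (Sym2 V)) : Finset V :=
  Finset.univ.filter fun v => ¬ Linked B b v

/-- The graph Laplacian `Δ` of the graph with conductances `c`. -/
def lap (c : Sym2 V → ℝ) : Matrix V V ℝ := fun u v =>
  if u = v then ∑ w ∈ Finset.univ.filter (· ≠ u), c s(u, w) else -c s(u, v)

/-- The Dirichlet Laplacian `Δ_D`, indexed by `V \ {b}`. -/
def dlap (c : Sym2 V → ℝ) (b : V) : Matrix {w : V // w ≠ b} {w : V // w ≠ b} ℝ :=
  Matrix.of fun p q => lap c p.1 q.1

/-- The Green function with Dirichlet boundary condition at `b` (the inverse of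
the Dirichlet Laplacian), with the convention that it vanishes as soon as one
of its arguments is `b`. -/
def green (c : Sym2 V → ℝ) (b : V) (u v : V) : ℝ :=
  if hu : u = b then 0 else if hv : v = b then 0 else (dlap c b)⁻¹ ⟨u, hu⟩ ⟨v, hv⟩

/-- The probability of the event `p` under the probability measure on
two-component spanning forests assigning to each 2SF a probability
proportional to its weight. -/
def pr2 (c : Sym2 V → ℝ) (p : Finset (Sym2 V) → Prop) : ℝ :=
  (∑ B ∈ Finset.univ.filter (fun B => IsSF 2 B ∧ p B), wt c B) / kappa2 c

/-- The expectation of `((floating b B).card : ℝ) ^ k`, i.e. of `|Σ|^k`, under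
the probability measure on two-component spanning forests proportional to
weight. -/
def expPow (c : Sym2 V → ℝ) (b : V) (k : ℕ) : ℝ :=
  (∑ B ∈ Finset.univ.filter (IsSF 2), wt c B * ((floating b B).card : ℝ) ^ k) / kappa2 c

/-- `|∂Σ|`: the sum of the conductances of the edges having exactly one
endpoint in the floating component of `B`. -/
def bdryWt (c : Sym2 V → ℝ) (b : V) (B : Finset (Sym2 V)) : ℝ :=
  ∑ u ∈ floating b B, ∑ v ∈ (floating b B)ᶜ, c s(u, v)

/-- The expectation of `|∂Σ|` under the probability measure on two-component
spanning forests proportional to weight. -/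
def expBdry (c : Sym2 V → ℝ) (b : V) : ℝ :=
  (∑ B ∈ Finset.univ.filter (IsSF 2), wt c B * bdryWt c b B) / kappa2 c


section Proof



lemma linked_refl (B : Finset (Sym2 V)) (a : V) : Linked B a a := Relation.ReflTransGen.refl

lemma linked_symm {B : Finset (Sym2 V)} {a b : V} (h : Linked B a b) : Linked B b a := by
  refine (@Relation.ReflTransGen.stdSymm _ _ ⟨?_⟩).symm _ _ h
  intro x y hxy
  rwa [Sym2.eq_swap]

lemma linked_trans {B : Finset (Sym2 V)} {a b c : V} (h : Linked B a b) (h' : Linked B b c) :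
    Linked B a c := Relation.ReflTransGen.trans h h'

lemma linked_mono {B B' : Finset (Sym2 V)} (h : B ⊆ B') {a b : V} (hl : Linked B a b) :
    Linked B' a b := Relation.ReflTransGen.mono (fun _ _ hxy => h hxy) _ _ hl

lemma linked_empty {a b : V} : Linked (∅ : Finset (Sym2 V)) a b ↔ a = b := by
  constructor
  · intro h
    induction h with
    | refl => rfl
    | tail _ h2 ih => simp at h2
  · rintro rfl; exact linked_refl _ _

lemma linked_single {B : Finset (Sym2 V)} {x y : V} (h : s(x, y) ∈ B) : Linked B x y :=
  Relation.ReflTransGen.single h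

lemma linked_insert_iff {B : Finset (Sym2 V)} {x y a b : V} :
    Linked (insert s(x, y) B) a b ↔
      Linked B a b ∨ (Linked B a x ∧ Linked B y b) ∨ (Linked B a y ∧ Linked B x b) := by
  constructor
  · intro h
    induction h with
    | refl => exact Or.inl (linked_refl _ _)
    | @tail c d h1 h2 ih =>
      rcases Finset.mem_insert.mp h2 with he | hB
      · rcases Sym2.eq_iff.mp he with ⟨rfl, rfl⟩ | ⟨rfl, rfl⟩
        · rcases ih with h | ⟨ha, _⟩ | ⟨ha, hb⟩
          · exact Or.inr (Or.inl ⟨h, linked_refl _ _⟩)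
          · exact Or.inr (Or.inl ⟨ha, linked_refl _ _⟩)
          · exact Or.inl ha
        · rcases ih with h | ⟨ha, hb⟩ | ⟨ha, _⟩
          · exact Or.inr (Or.inr ⟨h, linked_refl _ _⟩)
          · exact Or.inl ha
          · exact Or.inr (Or.inr ⟨ha, linked_refl _ _⟩)
      · rcases ih with h | ⟨ha, hb⟩ | ⟨ha, hb⟩
        · exact Or.inl (h.tail hB)
        · exact Or.inr (Or.inl ⟨ha, hb.tail hB⟩)
        · exact Or.inr (Or.inr ⟨ha, hb.tail hB⟩)
  · rintro (h | ⟨ha, hb⟩ | ⟨ha, hb⟩)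
    · exact linked_mono (Finset.subset_insert _ _) h
    · exact linked_trans (linked_mono (Finset.subset_insert _ _) ha)
        (linked_trans (linked_single (Finset.mem_insert_self _ _))
          (linked_mono (Finset.subset_insert _ _) hb))
    · refine linked_trans (linked_mono (Finset.subset_insert _ _) ha)
        (linked_trans (linked_single ?_) (linked_mono (Finset.subset_insert _ _) hb))
      rw [Sym2.eq_swap]; exact Finset.mem_insert_self _ _

def cls (B : Finset (Sym2 V)) (v : V) : Finset V := Finset.univ.filter (Linked B v)

lemma mem_cls {B : Finset (Sym2 V)} {v x : V} : x ∈ cls B v ↔ Linked B v x := by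
  simp [cls]

lemma cls_eq_of_linked {B : Finset (Sym2 V)} {v w : V} (h : Linked B v w) :
    cls B v = cls B w := by
  ext x
  simp only [mem_cls]
  exact ⟨fun h' => linked_trans (linked_symm h) h', fun h' => linked_trans h h'⟩

lemma linked_of_cls_eq {B : Finset (Sym2 V)} {v w : V} (h : cls B v = cls B w) :
    Linked B v w := by
  have : w ∈ cls B v := h ▸ mem_cls.mpr (linked_refl _ _)
  exact mem_cls.mp this

def comps (B : Finset (Sym2 V)) : Finset (Finset V) := Finset.univ.image (cls B)

lemma ncomp_eq (B : Finset (Sym2 V)) : ncomp B = (comps B).card := by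
  let f : Quot (Linked B) → {s // s ∈ comps B} :=
    Quot.lift (fun v => ⟨cls B v, Finset.mem_image_of_mem _ (Finset.mem_univ v)⟩)
      (fun a b h => Subtype.ext (cls_eq_of_linked h))
  have hbij : Function.Bijective f := by
    constructor
    · rintro ⟨a⟩ ⟨b⟩ hab
      have h2 := congrArg Subtype.val hab
      simp only [f] at h2
      exact Quot.sound (linked_of_cls_eq h2)
    · rintro ⟨s, hs⟩
      obtain ⟨v, -, rfl⟩ := Finset.mem_image.mp hs
      exact ⟨Quot.mk _ v, rfl⟩
  rw [ncomp, Nat.card_congr (Equiv.ofBijective f hbij), Nat.card_eq_fintype_card,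
    Fintype.card_coe]

lemma ncomp_empty : ncomp (∅ : Finset (Sym2 V)) = Fintype.card V := by
  rw [ncomp_eq]
  have : comps (∅ : Finset (Sym2 V)) = Finset.univ.image (fun v => ({v} : Finset V)) := by
    apply Finset.image_congr
    intro v _
    ext x
    simp [mem_cls, linked_empty, eq_comm]
  rw [comps] at *
  rw [this, Finset.card_image_of_injective _ (fun a b h => by
    simpa using congrArg (a ∈ ·) h), Finset.card_univ]

lemma linked_insert_of_linked {B : Finset (Sym2 V)} {x y : V} (h : Linked B x y) :
    Linked (insert s(x, y) B) = Linked B := by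
  funext a b
  apply propext
  rw [linked_insert_iff]
  constructor
  · rintro (h' | ⟨ha, hb⟩ | ⟨ha, hb⟩)
    · exact h'
    · exact linked_trans ha (linked_trans h hb)
    · exact linked_trans ha (linked_trans (linked_symm h) hb)
  · exact Or.inl

lemma ncomp_insert_of_not_linked {B : Finset (Sym2 V)} {x y : V} (h : ¬ Linked B x y) :
    ncomp (insert s(x, y) B) + 1 = ncomp B := by
  classical
  set B' := insert s(x, y) B with hB'
  have hxy : x ≠ y := fun hxy => h (hxy ▸ linked_refl _ _)
  set D : Finset V := cls B x ∪ cls B y with hD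
  have hclsD : ∀ v : V, (Linked B v x ∨ Linked B v y) → cls B' v = D := by
    intro v hv
    ext w
    simp only [mem_cls, hB', linked_insert_iff, hD, Finset.mem_union]
    rcases hv with hv | hv
    · constructor
      · rintro (h' | ⟨ha, hb⟩ | ⟨ha, hb⟩)
        · exact Or.inl (linked_trans (linked_symm hv) h')
        · exact Or.inr hb
        · exact absurd (linked_trans (linked_symm hv) ha) h
      · rintro (hw | hw)
        · exact Or.inl (linked_trans hv hw)
        · exact Or.inr (Or.inl ⟨hv, hw⟩)
    · constructor
      · rintro (h' | ⟨ha, hb⟩ | ⟨ha, hb⟩)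
        · exact Or.inr (linked_trans (linked_symm hv) h')
        · exact absurd (linked_trans (linked_symm ha) hv) h
        · exact Or.inl hb
      · rintro (hw | hw)
        · exact Or.inr (Or.inr ⟨hv, hw⟩)
        · exact Or.inl (linked_trans hv hw)
  have hclsE : ∀ v : V, ¬ Linked B v x → ¬ Linked B v y → cls B' v = cls B v := by
    intro v hvx hvy
    ext w
    simp only [mem_cls, hB', linked_insert_iff]
    constructor
    · rintro (h' | ⟨ha, hb⟩ | ⟨ha, hb⟩)
      · exact h'
      · exact absurd ha hvx
      · exact absurd ha hvy
    · exact Or.inl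
  have hDx : x ∈ D := Finset.mem_union_left _ (mem_cls.mpr (linked_refl _ _))
  have hDy : y ∈ D := Finset.mem_union_right _ (mem_cls.mpr (linked_refl _ _))
  have hDnot : D ∉ comps B := by
    intro hmem
    obtain ⟨w, -, hw⟩ := Finset.mem_image.mp hmem
    exact h (linked_trans (linked_symm (mem_cls.mp (hw ▸ hDx))) (mem_cls.mp (hw ▸ hDy)))
  have hcomp : comps B' = insert D (((comps B).erase (cls B x)).erase (cls B y)) := by
    ext s
    simp only [comps, Finset.mem_image, Finset.mem_insert, Finset.mem_erase]
    constructor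
    · rintro ⟨v, -, rfl⟩
      by_cases hvx : Linked B v x
      · exact Or.inl (hclsD v (Or.inl hvx))
      · by_cases hvy : Linked B v y
        · exact Or.inl (hclsD v (Or.inr hvy))
        · refine Or.inr ⟨?_, ?_, ⟨v, Finset.mem_univ v, (hclsE v hvx hvy).symm ▸ rfl⟩⟩
          · rw [hclsE v hvx hvy]
            exact fun h' => hvy (linked_of_cls_eq h')
          · rw [hclsE v hvx hvy]
            exact fun h' => hvx (linked_of_cls_eq h')
    · rintro (rfl | ⟨hsy, hsx, v, -, rfl⟩)
      · exact ⟨x, Finset.mem_univ x, hclsD x (Or.inl (linked_refl _ _))⟩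
      · have hvx : ¬ Linked B v x := fun h' => hsx (cls_eq_of_linked h')
        have hvy : ¬ Linked B v y := fun h' => hsy (cls_eq_of_linked h')
        exact ⟨v, Finset.mem_univ v, hclsE v hvx hvy⟩
  have hyx : cls B y ∈ (comps B).erase (cls B x) := by
    refine Finset.mem_erase.mpr ⟨fun h' => h (linked_symm (linked_of_cls_eq h')), ?_⟩
    exact Finset.mem_image_of_mem _ (Finset.mem_univ y)
  have hxm : cls B x ∈ comps B := Finset.mem_image_of_mem _ (Finset.mem_univ x)
  have hDnot' : D ∉ ((comps B).erase (cls B x)).erase (cls B y) := by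
    intro h'
    exact hDnot (Finset.mem_of_mem_erase (Finset.mem_of_mem_erase h'))
  rw [ncomp_eq, ncomp_eq, hcomp, Finset.card_insert_of_notMem hDnot',
    Finset.card_erase_of_mem hyx, Finset.card_erase_of_mem hxm]
  have h2 : 2 ≤ (comps B).card := by
    have := Finset.card_le_card (Finset.insert_subset (Finset.mem_erase.mp hyx).2
      (Finset.singleton_subset_iff.mpr hxm) : ({cls B y, cls B x} : Finset (Finset V)) ⊆ comps B)
    rwa [Finset.card_insert_of_notMem (by
      simp only [Finset.mem_singleton]
      exact (Finset.mem_erase.mp hyx).1), Finset.card_singleton] at this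
  omega

def Independent (B : Finset (Sym2 V)) : Prop :=
  ∀ x y : V, s(x, y) ∈ B → ¬ Linked (B.erase s(x, y)) x y

lemma independent_mono {B B' : Finset (Sym2 V)} (h : B ⊆ B') (hI : Independent B') :
    Independent B := by
  intro x y hxy hl
  exact hI x y (h hxy) (linked_mono (Finset.erase_subset_erase _ h) hl)

lemma independent_no_loop {B : Finset (Sym2 V)} (hI : Independent B) (v : V) :
    s(v, v) ∉ B := fun h => hI v v h (linked_refl _ _)

lemma ncomp_congr {B B' : Finset (Sym2 V)} (h : Linked B = Linked B') :
    ncomp B = ncomp B' := by rw [ncomp, ncomp, h]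

lemma ncomp_erase_of_linked {B : Finset (Sym2 V)} {x y : V} (hxy : s(x, y) ∈ B)
    (hl : Linked (B.erase s(x, y)) x y) : ncomp B = ncomp (B.erase s(x, y)) := by
  apply ncomp_congr
  conv_lhs => rw [← Finset.insert_erase hxy]
  exact linked_insert_of_linked hl

lemma le_card_add_ncomp (B : Finset (Sym2 V)) : Fintype.card V ≤ B.card + ncomp B := by
  induction B using Finset.strongInduction with
  | _ B ih =>
    rcases B.eq_empty_or_nonempty with rfl | ⟨e, he⟩
    · simp [ncomp_empty]
    · induction e using Sym2.ind with
      | _ x y =>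
        have hB : B = insert s(x, y) (B.erase s(x, y)) := (Finset.insert_erase he).symm
        have hcard : (B.erase s(x, y)).card + 1 = B.card := Finset.card_erase_add_one he
        have hlt : B.erase s(x, y) ⊂ B := Finset.erase_ssubset he
        have := ih _ hlt
        by_cases hl : Linked (B.erase s(x, y)) x y
        · have := ncomp_erase_of_linked he hl
          omega
        · have := ncomp_insert_of_not_linked hl
          rw [← hB] at this
          omega

lemma independent_card {B : Finset (Sym2 V)} (hI : Independent B) :
    B.card + ncomp B = Fintype.card V := by
  induction B using Finset.strongInduction with
  | _ B ih =>
    rcases B.eq_empty_or_nonempty with rfl | ⟨e, he⟩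
    · simp [ncomp_empty]
    · induction e using Sym2.ind with
      | _ x y =>
        have hB : B = insert s(x, y) (B.erase s(x, y)) := (Finset.insert_erase he).symm
        have hcard : (B.erase s(x, y)).card + 1 = B.card := Finset.card_erase_add_one he
        have hlt : B.erase s(x, y) ⊂ B := Finset.erase_ssubset he
        have hIe : Independent (B.erase s(x, y)) :=
          independent_mono (Finset.erase_subset _ _) hI
        have hrec := ih _ hlt hIe
        have hnl : ¬ Linked (B.erase s(x, y)) x y := hI x y he
        have := ncomp_insert_of_not_linked hnl
        rw [← hB] at this
        omega

lemma card_ncomp_independent {B : Finset (Sym2 V)}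
    (h : B.card + ncomp B = Fintype.card V) : Independent B := by
  intro x y hxy hl
  have hB : B = insert s(x, y) (B.erase s(x, y)) := (Finset.insert_erase hxy).symm
  have hcard : (B.erase s(x, y)).card + 1 = B.card := Finset.card_erase_add_one hxy
  have hn : ncomp B = ncomp (B.erase s(x, y)) := ncomp_erase_of_linked hxy hl
  have := le_card_add_ncomp (B.erase s(x, y))
  omega

lemma exists_spanning (B : Finset (Sym2 V)) :
    ∃ T ⊆ B, Independent T ∧ Linked T = Linked B := by
  induction B using Finset.strongInduction with
  | _ B ih =>
    by_cases hI : Independent B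
    · exact ⟨B, Finset.Subset.refl _, hI, rfl⟩
    · simp only [Independent, not_forall, not_not] at hI
      obtain ⟨x, y, hxy, hl⟩ := hI
      obtain ⟨T, hT1, hT2, hT3⟩ := ih _ (Finset.erase_ssubset hxy)
      refine ⟨T, hT1.trans (Finset.erase_subset _ _), hT2, ?_⟩
      rw [hT3]
      conv_rhs => rw [← Finset.insert_erase hxy]
      rw [linked_insert_of_linked hl]

def Grove (W : Finset V) (B : Finset (Sym2 V)) : Prop :=
  ncomp B = W.card ∧ B.card + W.card = Fintype.card V ∧
    ∀ w ∈ W, ∀ w' ∈ W, Linked B w w' → w = w'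

lemma grove_independent {W : Finset V} {B : Finset (Sym2 V)} (hG : Grove W B) :
    Independent B := card_ncomp_independent (by rw [hG.1]; exact hG.2.1)

lemma grove_linked_exists {W : Finset V} {B : Finset (Sym2 V)} (hG : Grove W B) (v : V) :
    ∃ w ∈ W, Linked B v w := by
  have hinj : Set.InjOn (cls B) W := fun a ha b hb hab =>
    hG.2.2 a ha b hb (linked_of_cls_eq hab)
  have hsub : W.image (cls B) ⊆ comps B := by
    intro s hs
    obtain ⟨w, -, rfl⟩ := Finset.mem_image.mp hs
    exact Finset.mem_image_of_mem _ (Finset.mem_univ w)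
  have hcard : (comps B).card ≤ (W.image (cls B)).card := by
    rw [Finset.card_image_of_injOn hinj, ← hG.1, ncomp_eq]
  have heq : W.image (cls B) = comps B := Finset.eq_of_subset_of_card_le hsub hcard
  have : cls B v ∈ W.image (cls B) := heq ▸ Finset.mem_image_of_mem _ (Finset.mem_univ v)
  obtain ⟨w, hw, hweq⟩ := Finset.mem_image.mp this
  exact ⟨w, hw, linked_symm (linked_of_cls_eq hweq)⟩

def degB (B : Finset (Sym2 V)) (v : V) : ℕ := (B.filter (fun e => v ∈ e)).card

lemma handshake {B : Finset (Sym2 V)} (hB : ∀ v : V, s(v, v) ∉ B) :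
    ∑ v : V, degB B v = 2 * B.card := by
  have h1 : ∀ v : V, degB B v = ∑ e ∈ B, if v ∈ e then 1 else 0 := by
    intro v
    rw [degB, Finset.card_filter]
  have h2 : ∀ e ∈ B, (∑ v : V, if v ∈ e then 1 else 0) = 2 := by
    intro e he
    induction e using Sym2.ind with
    | _ x y =>
      have hxy : x ≠ y := fun h => hB x (h ▸ he)
      have h3 : (Finset.univ.filter (fun v => v ∈ s(x, y))) = {x, y} := by
        ext v
        simp [Sym2.mem_iff]
      rw [← Finset.card_filter, h3, Finset.card_pair hxy]
  calc ∑ v : V, degB B v = ∑ v : V, ∑ e ∈ B, if v ∈ e then 1 else 0 := by simp only [h1]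
  _ = ∑ e ∈ B, ∑ v : V, if v ∈ e then 1 else 0 := Finset.sum_comm
  _ = ∑ _e ∈ B, 2 := Finset.sum_congr rfl h2
  _ = 2 * B.card := by rw [Finset.sum_const, smul_eq_mul, mul_comm]

lemma linked_exists_edge {B : Finset (Sym2 V)} {a b : V} (h : Linked B a b) (hab : a ≠ b) :
    ∃ e ∈ B, a ∈ e := by
  rcases (Relation.ReflTransGen.cases_head h) with rfl | ⟨c, hc, -⟩
  · exact absurd rfl hab
  · exact ⟨s(a, c), hc, Sym2.mem_mk_left _ _⟩

lemma grove_exists_leaf {W : Finset V} {B : Finset (Sym2 V)} (hG : Grove W B)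
    (hne : ∃ v : V, v ∉ W) :
    ∃ u, u ∉ W ∧ ∃ z, z ≠ u ∧ s(u, z) ∈ B ∧ ∀ e ∈ B, u ∈ e → e = s(u, z) := by
  have hI := grove_independent hG
  have hnl := independent_no_loop hI
  have hdeg1 : ∀ v, v ∉ W → 1 ≤ degB B v := by
    intro v hv
    obtain ⟨w, hw, hlink⟩ := grove_linked_exists hG v
    have hvw : v ≠ w := fun h => hv (h ▸ hw)
    obtain ⟨e, heB, hve⟩ := linked_exists_edge hlink hvw
    exact Finset.card_pos.mpr ⟨e, Finset.mem_filter.mpr ⟨heB, hve⟩⟩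
  obtain ⟨v0, hv0⟩ := hne
  obtain ⟨w0, hw0, hlink0⟩ := grove_linked_exists hG v0
  have hv0w0 : w0 ≠ v0 := fun h => hv0 (h ▸ hw0)
  obtain ⟨e0, he0B, hw0e0⟩ := linked_exists_edge (linked_symm hlink0) hv0w0
  have hdegw0 : 1 ≤ degB B w0 :=
    Finset.card_pos.mpr ⟨e0, Finset.mem_filter.mpr ⟨he0B, hw0e0⟩⟩
  -- find u ∉ W with degB B u = 1
  by_cases hall : ∀ u, u ∉ W → degB B u ≠ 1
  · exfalso
    have hge2 : ∀ u, u ∉ W → 2 ≤ degB B u := by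
      intro u hu
      have h1 := hdeg1 u hu
      have h2 := hall u hu
      omega
    have hsum := handshake hnl
    have hsplit : ∑ v : V, degB B v = ∑ v ∈ W, degB B v + ∑ v ∈ Wᶜ, degB B v :=
      (Finset.sum_add_sum_compl W _).symm
    have hWc : ∀ v ∈ Wᶜ, 2 ≤ degB B v := fun v hv =>
      hge2 v (Finset.mem_compl.mp hv)
    have h2 : 2 * Wᶜ.card ≤ ∑ v ∈ Wᶜ, degB B v := by
      calc 2 * Wᶜ.card = ∑ _v ∈ Wᶜ, 2 := by rw [Finset.sum_const, smul_eq_mul, mul_comm]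
      _ ≤ ∑ v ∈ Wᶜ, degB B v := Finset.sum_le_sum hWc
    have h3 : degB B w0 ≤ ∑ v ∈ W, degB B v :=
      Finset.single_le_sum (fun _ _ => Nat.zero_le _) hw0
    have hcc : Wᶜ.card = B.card := by
      have := hG.2.1
      have hcompl := Finset.card_compl W
      omega
    omega
  · push_neg at hall
    obtain ⟨u, hu, hdu⟩ := hall
    obtain ⟨e, he⟩ := Finset.card_eq_one.mp hdu
    have heB : e ∈ B ∧ u ∈ e := by
      have : e ∈ B.filter (fun e => u ∈ e) := he ▸ Finset.mem_singleton_self e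
      exact ⟨(Finset.mem_filter.mp this).1, (Finset.mem_filter.mp this).2⟩
    obtain ⟨z, rfl⟩ := Sym2.mem_iff_exists.mp heB.2
    refine ⟨u, hu, z, ?_, heB.1, ?_⟩
    · intro h
      exact hnl u (h ▸ heB.1)
    · intro e' he' hue'
      have : e' ∈ B.filter (fun e => u ∈ e) := Finset.mem_filter.mpr ⟨he', hue'⟩
      rw [he] at this
      exact Finset.mem_singleton.mp this


section DetTools

lemma det_eq_det_of_unit_col {ι : Type*} [Fintype ι] [DecidableEq ι] (M : Matrix ι ι ℝ)
    (u : ι) (h0 : ∀ x, x ≠ u → M x u = 0) (h1 : M u u = 1) :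
    M.det = (M.submatrix (fun p : {x : ι // x ≠ u} => (p : ι))
      (fun p : {x : ι // x ≠ u} => (p : ι))).det := by
  classical
  haveI : Unique {x : ι // ¬ x ≠ u} :=
    ⟨⟨⟨u, not_not.mpr rfl⟩⟩, fun a => Subtype.ext (not_not.mp a.2)⟩
  let e : {x : ι // x ≠ u} ⊕ {x : ι // ¬ x ≠ u} ≃ ι := Equiv.sumCompl _
  have hM : M.submatrix e e = Matrix.fromBlocks
      (M.submatrix (fun p : {x : ι // x ≠ u} => (p : ι)) (fun p : {x : ι // x ≠ u} => (p : ι)))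
      0
      (Matrix.of fun (i : {x : ι // ¬ x ≠ u}) (j : {x : ι // x ≠ u}) => M i.1 j.1)
      (Matrix.of fun (i : {x : ι // ¬ x ≠ u}) (j : {x : ι // ¬ x ≠ u}) => M i.1 j.1) := by
    ext i j
    rcases i with i | i
    · rcases j with j | j
      · simp [e, Matrix.submatrix_apply]
      · have hj : (j : ι) = u := not_not.mp j.2
        simp [e, Matrix.submatrix_apply, hj, h0 i.1 i.2]
    · rcases j with j | j
      · simp [e, Matrix.submatrix_apply]
      · simp [e, Matrix.submatrix_apply]
  have hdet := Matrix.det_submatrix_equiv_self e M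
  rw [← hdet, hM, Matrix.det_fromBlocks_zero₁₂]
  have hD : (Matrix.of fun (i : {x : ι // ¬ x ≠ u}) (j : {x : ι // ¬ x ≠ u}) =>
      M i.1 j.1).det = 1 := by
    rw [Matrix.det_unique]
    have hd : ((default : {x : ι // ¬ x ≠ u}) : ι) = u :=
      not_not.mp (default : {x : ι // ¬ x ≠ u}).2
    show M _ _ = 1
    rw [hd]
    exact h1
  rw [hD, mul_one]

lemma det_eq_det_of_unit_row {ι : Type*} [Fintype ι] [DecidableEq ι] (M : Matrix ι ι ℝ)
    (u : ι) (h0 : ∀ x, x ≠ u → M u x = 0) (h1 : M u u = 1) :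
    M.det = (M.submatrix (fun p : {x : ι // x ≠ u} => (p : ι))
      (fun p : {x : ι // x ≠ u} => (p : ι))).det := by
  rw [← Matrix.det_transpose M,
    det_eq_det_of_unit_col M.transpose u (fun x hx => h0 x hx) h1,
    ← Matrix.transpose_submatrix, Matrix.det_transpose]

lemma det_eq_zero_of_sum_rows {ι : Type*} [Fintype ι] [DecidableEq ι] (M : Matrix ι ι ℝ)
    (s : Finset ι) (p0 : ι) (hp0 : p0 ∈ s) (h : ∑ p ∈ s, M p = 0) : M.det = 0 := by
  classical
  have h1 : ∀ (t : Finset ι), p0 ∉ t →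
      (M.updateRow p0 (M p0 + ∑ p ∈ t, M p)).det = M.det := by
    intro t
    induction t using Finset.induction with
    | empty => intro _; erw [Finset.sum_empty, add_zero, Matrix.updateRow_eq_self]
    | @insert a t ha ih =>
      intro hins
      have hp0t : p0 ∉ t := fun h' => hins (Finset.mem_insert_of_mem h')
      have hap0 : a ≠ p0 := fun h' => hins (h' ▸ Finset.mem_insert_self a t)
      erw [Finset.sum_insert ha, ← add_assoc, add_comm (M p0) (M a), add_assoc,
        Matrix.det_updateRow_add, ih hp0t]
      have hzero : (M.updateRow p0 (M a)).det = 0 := by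
        apply Matrix.det_zero_of_row_eq (Ne.symm hap0)
        rw [Matrix.updateRow_self, Matrix.updateRow_ne hap0]
      rw [hzero, zero_add]
  have hsum : M p0 + ∑ p ∈ s.erase p0, M p = 0 := by
    erw [Finset.add_sum_erase _ _ hp0]; exact h
  have := h1 (s.erase p0) (Finset.notMem_erase _ _)
  rw [hsum] at this
  rw [← this]
  apply Matrix.det_eq_zero_of_row_eq_zero p0
  intro j
  rw [Matrix.updateRow_self]
  rfl

end DetTools

def Adapted (W : Finset V) (g : V → V) : Prop :=
  (∀ v ∈ W, g v = v) ∧ ∀ v ∉ W, g v ≠ v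

def NoCyc (W : Finset V) (g : V → V) : Prop :=
  ∀ v ∉ W, ∀ n : ℕ, 0 < n → g^[n] v ≠ v

def fmat (W : Finset V) (g : V → V) : Matrix {v : V // v ∉ W} {v : V // v ∉ W} ℝ :=
  Matrix.of fun p q => (if q = p then (1 : ℝ) else 0) - (if (q : V) = g p then 1 else 0)

lemma exists_source {W : Finset V} {g : V → V} (hA : Adapted W g) (hN : NoCyc W g)
    (hne : (Wᶜ : Finset V).Nonempty) : ∃ u ∉ W, ∀ x, x ∉ W → g x ≠ u := by
  by_contra hcon
  push_neg at hcon
  have hsub : (Wᶜ : Finset V) ⊆ Wᶜ.image g := by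
    intro u hu
    obtain ⟨x, hx, hgx⟩ := hcon u (Finset.mem_compl.mp hu)
    exact Finset.mem_image.mpr ⟨x, Finset.mem_compl.mpr hx, hgx⟩
  have heq : (Wᶜ : Finset V) = Wᶜ.image g :=
    Finset.eq_of_subset_of_card_le hsub (Finset.card_image_le)
  have hmaps : ∀ x ∈ (Wᶜ : Finset V), g x ∈ (Wᶜ : Finset V) := by
    intro x hx
    rw [heq]
    exact Finset.mem_image_of_mem _ hx
  obtain ⟨v, hv⟩ := hne
  have hiter : ∀ k : ℕ, g^[k] v ∈ (Wᶜ : Finset V) := by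
    intro k
    induction k with
    | zero => exact hv
    | succ k ih => rw [Function.iterate_succ_apply']; exact hmaps _ ih
  have hlt : Fintype.card V < Fintype.card (Fin (Fintype.card V + 1)) := by
    simp
  obtain ⟨i, j, hij, hfij⟩ :=
    Fintype.exists_ne_map_eq_of_card_lt (fun k : Fin (Fintype.card V + 1) => g^[(k : ℕ)] v) hlt
  rcases Ne.lt_or_gt hij with hlt' | hlt'
  · have : g^[(j : ℕ) - (i : ℕ)] (g^[(i : ℕ)] v) = g^[(i : ℕ)] v := by
      rw [← Function.iterate_add_apply, Nat.sub_add_cancel (le_of_lt hlt')]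
      exact hfij.symm
    exact hN _ (Finset.mem_compl.mp (hiter i)) _ (by omega) this
  · have : g^[(i : ℕ) - (j : ℕ)] (g^[(j : ℕ)] v) = g^[(j : ℕ)] v := by
      rw [← Function.iterate_add_apply, Nat.sub_add_cancel (le_of_lt hlt')]
      exact hfij
    exact hN _ (Finset.mem_compl.mp (hiter j)) _ (by omega) this

lemma det_fmat_nocyc : ∀ (n : ℕ) (W : Finset V) (g : V → V), (Wᶜ : Finset V).card = n →
    Adapted W g → NoCyc W g → (fmat W g).det = 1 := by
  intro n
  induction n with
  | zero =>
    intro W g hcard _ _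
    haveI : IsEmpty {v : V // v ∉ W} := by
      refine ⟨fun p => ?_⟩
      have : p.1 ∈ (Wᶜ : Finset V) := Finset.mem_compl.mpr p.2
      rw [Finset.card_eq_zero.mp hcard] at this
      exact absurd this (Finset.notMem_empty _)
    exact Matrix.det_isEmpty
  | succ n ih =>
    intro W g hcard hA hN
    have hne : (Wᶜ : Finset V).Nonempty := Finset.card_pos.mp (by omega)
    obtain ⟨u, hu, hsrc⟩ := exists_source hA hN hne
    set p0 : {v : V // v ∉ W} := ⟨u, hu⟩ with hp0
    have h0 : ∀ x, x ≠ p0 → fmat W g x p0 = 0 := by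
      intro x hx
      show (if p0 = x then (1 : ℝ) else 0) - (if (p0 : V) = g x then 1 else 0) = 0
      rw [if_neg (Ne.symm hx), if_neg (fun h => hsrc x.1 x.2 h.symm), sub_zero]
    have h1 : fmat W g p0 p0 = 1 := by
      show (if p0 = p0 then (1 : ℝ) else 0) - (if (p0 : V) = g p0 then 1 else 0) = 1
      rw [if_pos rfl, if_neg (fun h => hA.2 u hu h.symm), sub_zero]
    rw [det_eq_det_of_unit_col (fmat W g) p0 h0 h1]
    set g' : V → V := Function.update g u u with hg'
    have hgg' : ∀ x : V, x ≠ u → g' x = g x := fun x hx => Function.update_of_ne hx _ _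
    have hA' : Adapted (insert u W) g' := by
      constructor
      · intro v hv
        rcases Finset.mem_insert.mp hv with rfl | hv
        · exact Function.update_self _ _ _
        · have hvu : v ≠ u := fun h => hu (h ▸ hv)
          rw [hgg' v hvu]
          exact hA.1 v hv
      · intro v hv
        have hvu : v ≠ u := fun h => hv (h ▸ Finset.mem_insert_self u W)
        have hvW : v ∉ W := fun h => hv (Finset.mem_insert_of_mem h)
        rw [hgg' v hvu]
        exact hA.2 v hvW
    have hN' : NoCyc (insert u W) g' := by
      intro v hv m hm hit
      have hvu : v ≠ u := fun h => hv (h ▸ Finset.mem_insert_self u W)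
      have hvW : v ∉ W := fun h => hv (Finset.mem_insert_of_mem h)
      have havoid : ∀ k, k ≤ m → g'^[k] v ≠ u := by
        intro k hk hku
        have hmu : g'^[m] v = u := by
          have h5 : g'^[m] v = g'^[m - k] (g'^[k] v) := by
            rw [← Function.iterate_add_apply, Nat.sub_add_cancel hk]
          rw [h5, hku]
          exact Function.iterate_fixed (Function.update_self _ _ _) _
        rw [hit] at hmu
        exact hvu hmu
      have hsame : ∀ k, k ≤ m → g'^[k] v = g^[k] v := by
        intro k hk
        induction k with
        | zero => rfl
        | succ k ihk =>
          rw [Function.iterate_succ_apply', Function.iterate_succ_apply',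
            ihk (by omega), ← ihk (by omega), hgg' _ (havoid k (by omega))]
      exact hN v hvW m hm (by rw [← hsame m (le_refl m)]; exact hit)
    have hcard' : ((insert u W)ᶜ : Finset V).card = n := by
      have h1 : ((insert u W) : Finset V).card = W.card + 1 := Finset.card_insert_of_notMem hu
      have h2 := Finset.card_compl (insert u W) (α := V)
      have h3 := Finset.card_compl W (α := V)
      have h4 : W.card ≤ Fintype.card V := Finset.card_le_univ W
      have h5 : ((insert u W) : Finset V).card ≤ Fintype.card V := Finset.card_le_univ _
      omega
    have hresult := ih (insert u W) g' hcard' hA' hN'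
    rw [← hresult]
    let e : {p : {v : V // v ∉ W} // p ≠ p0} ≃ {v : V // v ∉ insert u W} :=
      { toFun := fun q => ⟨q.1.1, by
          intro hmem
          rcases Finset.mem_insert.mp hmem with h | h
          · exact q.2 (Subtype.ext h)
          · exact q.1.2 h⟩
        invFun := fun v => ⟨⟨v.1, fun h => v.2 (Finset.mem_insert_of_mem h)⟩,
          fun h => by
            have hvu : v.1 = u := congrArg Subtype.val h
            exact v.2 (by rw [hvu]; exact Finset.mem_insert_self u W)⟩
        left_inv := fun q => by ext; rfl
        right_inv := fun v => rfl }
    have hsub : (fmat W g).submatrix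
        (fun p : {x : {v : V // v ∉ W} // x ≠ p0} => (p : {v : V // v ∉ W}))
        (fun p : {x : {v : V // v ∉ W} // x ≠ p0} => (p : {v : V // v ∉ W}))
        = (fmat (insert u W) g').submatrix e e := by
      ext p q
      simp only [Matrix.submatrix_apply, fmat, Matrix.of_apply]
      have h1 : ((q : {v : V // v ∉ W}) = (p : {v : V // v ∉ W})) ↔ e q = e p := by
        constructor
        · intro h
          have h4 : ((q : {v : V // v ∉ W}) : V) = ((p : {v : V // v ∉ W}) : V) :=
            congrArg Subtype.val h
          exact Subtype.ext h4
        · intro h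
          have h4 : ((e q : {v : V // v ∉ insert u W}) : V)
              = ((e p : {v : V // v ∉ insert u W}) : V) := congrArg Subtype.val h
          exact Subtype.ext h4
      have h2 : ((e q : {v : V // v ∉ insert u W}) : V) = ((q : {v : V // v ∉ W}) : V) := rfl
      have h3 : g' ((e p : {v : V // v ∉ insert u W}) : V) = g ((p : {v : V // v ∉ W}) : V) := by
        apply hgg'
        exact fun h => p.2 (Subtype.ext h)
      rw [h2, h3, if_congr h1 rfl rfl]
    rw [hsub, Matrix.det_submatrix_equiv_self]

lemma det_fmat_cyc {W : Finset V} {g : V → V} (hA : Adapted W g) (hC : ¬ NoCyc W g) :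
    (fmat W g).det = 0 := by
  simp only [NoCyc, not_forall, not_not, exists_prop] at hC
  obtain ⟨v, hv, m, hm, hit⟩ := hC
  have hLm : ∀ L : ℕ, g^[m * L] v = v := by
    intro L
    rw [Function.iterate_mul]
    exact Function.iterate_fixed hit L
  have horb : ∀ k : ℕ, g^[k] v ∉ W := by
    intro k hk
    have hfix : ∀ j : ℕ, g^[j] (g^[k] v) = g^[k] v :=
      fun j => Function.iterate_fixed (hA.1 _ hk) j
    have hge : k ≤ m * (k + 1) := by nlinarith
    have h5 : g^[m * (k + 1)] v = g^[m * (k + 1) - k] (g^[k] v) := by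
      rw [← Function.iterate_add_apply, Nat.sub_add_cancel hge]
    rw [hLm (k + 1), hfix] at h5
    exact hv (h5 ▸ hk)
  set O : Finset V := (Finset.range m).image (fun k => g^[k] v) with hO
  have hvO : v ∈ O := Finset.mem_image.mpr ⟨0, Finset.mem_range.mpr hm, rfl⟩
  have hOW : ∀ x ∈ O, x ∉ W := by
    intro x hx
    obtain ⟨k, -, rfl⟩ := Finset.mem_image.mp hx
    exact horb k
  have himg : O.image g = O := by
    apply Finset.Subset.antisymm
    · intro y hy
      obtain ⟨x, hx, rfl⟩ := Finset.mem_image.mp hy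
      obtain ⟨k, hk, rfl⟩ := Finset.mem_image.mp hx
      rw [Finset.mem_range] at hk
      rw [← Function.iterate_succ_apply' g k v]
      rcases Nat.lt_or_ge (k + 1) m with h | h
      · exact Finset.mem_image.mpr ⟨k + 1, Finset.mem_range.mpr h, rfl⟩
      · have hksucc : k + 1 = m := by omega
        show g^[k + 1] v ∈ O
        rw [hksucc, hit]
        exact hvO
    · intro y hy
      obtain ⟨k, hk, rfl⟩ := Finset.mem_image.mp hy
      rw [Finset.mem_range] at hk
      rcases Nat.eq_zero_or_pos k with rfl | hkpos
      · refine Finset.mem_image.mpr ⟨g^[m - 1] v, ?_, ?_⟩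
        · exact Finset.mem_image.mpr ⟨m - 1, Finset.mem_range.mpr (by omega), rfl⟩
        · rw [← Function.iterate_succ_apply' g (m - 1) v]
          show g^[m - 1 + 1] v = g^[0] v
          rw [show m - 1 + 1 = m by omega]
          simpa using hit
      · refine Finset.mem_image.mpr ⟨g^[k - 1] v, ?_, ?_⟩
        · exact Finset.mem_image.mpr ⟨k - 1, Finset.mem_range.mpr (by omega), rfl⟩
        · rw [← Function.iterate_succ_apply' g (k - 1) v]
          show g^[k - 1 + 1] v = g^[k] v
          rw [show k - 1 + 1 = k by omega]
  have hinj : Set.InjOn g O := Finset.injOn_of_card_image_eq (by rw [himg])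
  set P : Finset {x : V // x ∉ W} := Finset.univ.filter (fun p => p.1 ∈ O) with hP
  have hp0 : (⟨v, hv⟩ : {x : V // x ∉ W}) ∈ P :=
    Finset.mem_filter.mpr ⟨Finset.mem_univ _, hvO⟩
  apply det_eq_zero_of_sum_rows (fmat W g) P ⟨v, hv⟩ hp0
  funext q
  erw [Finset.sum_apply]
  have hcards : (P.filter (fun p => (q : V) = g p.1)).card
      = (O.filter (fun x => (q : V) = g x)).card := by
    apply Finset.card_bij (fun p _ => p.1)
    · intro p hp
      simp only [Finset.mem_filter] at hp ⊢
      exact ⟨(Finset.mem_filter.mp hp.1).2, hp.2⟩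
    · intro p1 h1 p2 h2 h
      exact Subtype.ext h
    · intro x hx
      simp only [Finset.mem_filter] at hx
      exact ⟨⟨x, hOW x hx.1⟩, Finset.mem_filter.mpr
        ⟨Finset.mem_filter.mpr ⟨Finset.mem_univ _, hx.1⟩, hx.2⟩, rfl⟩
  have hcount : (O.filter (fun x => (q : V) = g x)).card = if (q : V) ∈ O then 1 else 0 := by
    by_cases hq : (q : V) ∈ O
    · rw [if_pos hq]
      have : (q : V) ∈ O.image g := himg.symm ▸ hq
      obtain ⟨x0, hx0, hgx0⟩ := Finset.mem_image.mp this
      rw [Finset.card_eq_one]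
      refine ⟨x0, ?_⟩
      ext x
      simp only [Finset.mem_filter, Finset.mem_singleton]
      constructor
      · rintro ⟨hxO, hgx⟩
        exact hinj hxO hx0 (by rw [← hgx, hgx0])
      · rintro rfl
        exact ⟨hx0, hgx0.symm⟩
    · rw [if_neg hq, Finset.card_eq_zero]
      apply Finset.filter_eq_empty_iff.mpr
      intro x hx hgx
      exact hq (by rw [hgx]; exact himg ▸ Finset.mem_image_of_mem g hx)
  have hqP : (q ∈ P) ↔ ((q : V) ∈ O) := by
    simp [hP]
  calc ∑ p ∈ P, fmat W g p q
      = ∑ p ∈ P, ((if q = p then (1 : ℝ) else 0) - (if (q : V) = g p.1 then 1 else 0)) := rfl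
    _ = (∑ p ∈ P, if q = p then (1 : ℝ) else 0)
        - ∑ p ∈ P, if (q : V) = g p.1 then (1 : ℝ) else 0 := Finset.sum_sub_distrib _ _
    _ = 0 := by
      rw [Finset.sum_ite_eq P q (fun _ => (1 : ℝ)), Finset.sum_boole]
      rw [hcards, hcount]
      by_cases hq : (q : V) ∈ O
      · rw [if_pos (hqP.mpr hq), if_pos hq]
        norm_num
      · rw [if_neg (fun h => hq (hqP.mp h)), if_neg hq]
        norm_num



def lapW (c : Sym2 V → ℝ) (W : Finset V) : Matrix {v : V // v ∉ W} {v : V // v ∉ W} ℝ :=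
  Matrix.of fun p q => lap c p.1 q.1

def rowv (W : Finset V) (p : {v : V // v ∉ W}) (z : V) : {v : V // v ∉ W} → ℝ :=
  fun q => (if q = p then (1 : ℝ) else 0) - (if (q : V) = z then 1 else 0)

lemma fmat_eq_rowv (W : Finset V) (g : V → V) :
    fmat W g = Matrix.of (fun p => rowv W p (g (p : V))) := rfl

lemma det_lapW (c : Sym2 V → ℝ) (W : Finset V) :
    (lapW c W).det = ∑ g ∈ (Finset.univ : Finset (V → V)).filter (Adapted W),
      (∏ v ∈ Wᶜ, c s(v, g v)) * (fmat W g).det := by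
  classical
  have hrow : lapW c W = fun p : {v : V // v ∉ W} =>
      ∑ z ∈ Finset.univ.erase (p : V), c s((p : V), z) • rowv W p z := by
    funext p q
    rw [Finset.sum_apply]
    show lap c p.1 q.1 = _
    by_cases hpq : q = p
    · subst hpq
      have h1 : ∀ z ∈ Finset.univ.erase (q : V),
          (c s((q : V), z) • rowv W q z) q = c s((q : V), z) := by
        intro z hz
        have hz' : (q : V) ≠ z := fun h => (Finset.mem_erase.mp hz).1 h.symm
        simp [rowv, hz']
      rw [Finset.sum_congr rfl h1]
      show (if (q : V) = (q : V) then _ else _) = _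
      rw [if_pos rfl, Finset.filter_ne']
    · have hne : (p : V) ≠ (q : V) := fun h => hpq (Subtype.ext h.symm)
      have h1 : ∀ z ∈ Finset.univ.erase (p : V),
          (c s((p : V), z) • rowv W p z) q = -(if (q : V) = z then c s((p : V), z) else 0) := by
        intro z hz
        simp only [rowv, Pi.smul_apply, smul_eq_mul, if_neg hpq]
        by_cases h : (q : V) = z <;> simp [h]
      rw [Finset.sum_congr rfl h1, Finset.sum_neg_distrib, Finset.sum_ite_eq,
        if_pos (Finset.mem_erase.mpr ⟨Ne.symm hne, Finset.mem_univ _⟩)]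
      show (if (p : V) = (q : V) then _ else _) = _
      rw [if_neg hne]
  have hexp := (Matrix.detRowAlternating :
      ({v : V // v ∉ W} → ℝ) [⋀^{v : V // v ∉ W}]→ₗ[ℝ] ℝ).toMultilinearMap.map_sum_finset
    (fun p z => c s((p : V), z) • rowv W p z) (fun p => Finset.univ.erase (p : V))
  have hstep1 : (lapW c W).det = ∑ r ∈ Fintype.piFinset (fun p : {v : V // v ∉ W} =>
      Finset.univ.erase (p : V)),
      (∏ p : {v : V // v ∉ W}, c s((p : V), r p)) *
        (Matrix.of (fun p => rowv W p (r p))).det := by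
    show Matrix.detRowAlternating (lapW c W) = _
    rw [hrow]
    rw [show (Matrix.detRowAlternating (fun p : {v : V // v ∉ W} =>
        ∑ z ∈ Finset.univ.erase (p : V), c s((p : V), z) • rowv W p z)) =
        ((Matrix.detRowAlternating :
          ({v : V // v ∉ W} → ℝ) [⋀^{v : V // v ∉ W}]→ₗ[ℝ] ℝ).toMultilinearMap
            fun p => ∑ z ∈ Finset.univ.erase (p : V), c s((p : V), z) • rowv W p z) from rfl,
      hexp]
    apply Finset.sum_congr rfl
    intro r _
    rw [MultilinearMap.map_smul_univ]
    rw [smul_eq_mul]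
    rfl
  rw [hstep1]
  refine Finset.sum_nbij' (fun r => fun v : V => if h : v ∉ W then r ⟨v, h⟩ else v)
    (fun g => fun p : {v : V // v ∉ W} => g (p : V)) ?_ ?_ ?_ ?_ ?_
  · intro r hr
    rw [Fintype.mem_piFinset] at hr
    refine Finset.mem_filter.mpr ⟨Finset.mem_univ _, ?_, ?_⟩
    · intro v hv
      show (if h : v ∉ W then r ⟨v, h⟩ else v) = v
      rw [dif_neg (not_not.mpr hv)]
    · intro v hv
      show (if h : v ∉ W then r ⟨v, h⟩ else v) ≠ v
      rw [dif_pos hv]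
      exact fun h => (Finset.mem_erase.mp (hr ⟨v, hv⟩)).1 h
  · intro g hg
    rw [Fintype.mem_piFinset]
    intro p
    refine Finset.mem_erase.mpr ⟨?_, Finset.mem_univ _⟩
    show g (p : V) ≠ (p : V)
    exact (Finset.mem_filter.mp hg).2.2 (p : V) p.2
  · intro r hr
    funext p
    show (if h : (p : V) ∉ W then r ⟨(p : V), h⟩ else (p : V)) = r p
    rw [dif_pos p.2]
  · intro g hg
    funext v
    by_cases hv : v ∉ W
    · show (if h : v ∉ W then g v else v) = g v
      rw [dif_pos hv]
    · show (if h : v ∉ W then g v else v) = g v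
      rw [dif_neg hv]
      exact ((Finset.mem_filter.mp hg).2.1 v (not_not.mp hv)).symm
  · intro r hr
    have h1 : (∏ v ∈ (Wᶜ : Finset V), c s(v, if h : v ∉ W then r ⟨v, h⟩ else v))
        = ∏ p : {v : V // v ∉ W}, c s((p : V), r p) := by
      rw [Finset.prod_subtype (Wᶜ : Finset V) (fun x => Finset.mem_compl)
        (fun v => c s(v, if h : v ∉ W then r ⟨v, h⟩ else v))]
      apply Finset.prod_congr rfl
      intro p _
      rw [dif_pos p.2]
    have h2 : fmat W (fun v => if h : v ∉ W then r ⟨v, h⟩ else v)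
        = Matrix.of (fun p => rowv W p (r p)) := by
      rw [fmat_eq_rowv]
      ext p q
      show rowv W p (if h : (p : V) ∉ W then r ⟨(p : V), h⟩ else (p : V)) q = rowv W p (r p) q
      rw [dif_pos p.2]
    rw [h1, h2]


def Phi (W : Finset V) (g : V → V) : Finset (Sym2 V) :=
  (Wᶜ : Finset V).image (fun v => s(v, g v))

lemma iterate_two_eq {A : Type*} {g : A → A} {v : A} (h : g (g v) = v) : g^[2] v = v := by
  rw [show (2 : ℕ) = 1 + 1 from rfl, Function.iterate_add_apply]
  simpa using h

lemma isolated_not_linked {B : Finset (Sym2 V)} {a : V} (h : ∀ e ∈ B, a ∉ e) {x : V}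
    (hl : Linked B a x) : a = x := by
  rcases Relation.ReflTransGen.cases_head hl with rfl | ⟨cc, hc, -⟩
  · rfl
  · exact absurd (Sym2.mem_mk_left _ _) (h _ hc)

lemma phi_edge_inj {W : Finset V} {g : V → V} (hN : NoCyc W g) :
    ∀ v ∈ (Wᶜ : Finset V), ∀ x ∈ (Wᶜ : Finset V),
      s(v, g v) = s(x, g x) → v = x := by
  intro v hv x hx h
  rcases Sym2.eq_iff.mp h with ⟨h1, _⟩ | ⟨h1, h2⟩
  · exact h1
  · by_cases hvx : v = x
    · exact hvx
    · exfalso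
      have hvW : v ∉ W := Finset.mem_compl.mp hv
      have hgg : g (g v) = v := by rw [h2, ← h1]
      exact hN v hvW 2 (by norm_num) (iterate_two_eq hgg)

lemma wt_phi {W : Finset V} {g : V → V} (hN : NoCyc W g) (c : Sym2 V → ℝ) :
    wt c (Phi W g) = ∏ v ∈ (Wᶜ : Finset V), c s(v, g v) := by
  rw [wt, Phi, Finset.prod_image (phi_edge_inj hN)]

lemma compl_insert_decomp {W : Finset V} {u : V} (hu : u ∉ W) :
    (Wᶜ : Finset V) = insert u ((insert u W)ᶜ : Finset V) := by
  ext v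
  simp only [Finset.mem_compl, Finset.mem_insert]
  constructor
  · intro hv
    by_cases hvu : v = u
    · exact Or.inl hvu
    · exact Or.inr (by push_neg; exact ⟨hvu, hv⟩)
  · rintro (rfl | hv)
    · exact hu
    · push_neg at hv
      exact hv.2

lemma phi_decomp {W : Finset V} {u : V} (hu : u ∉ W) (g : V → V) :
    Phi W g = insert s(u, g u) (((insert u W)ᶜ : Finset V).image (fun v => s(v, g v))) := by
  rw [Phi, compl_insert_decomp hu, Finset.image_insert]

lemma phi_image_congr {W : Finset V} {u : V} {g g' : V → V}
    (h : ∀ v, v ≠ u → g v = g' v) :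
    (((insert u W)ᶜ : Finset V).image (fun v => s(v, g v))) = Phi (insert u W) g' := by
  rw [Phi]
  apply Finset.image_congr
  intro v hv
  have hvu : v ≠ u := by
    intro hh
    exact (Finset.mem_compl.mp hv) (hh ▸ Finset.mem_insert_self u W)
  show s(v, g v) = s(v, g' v)
  rw [h v hvu]

lemma update_adapted {W : Finset V} {g : V → V} {u : V} (hA : Adapted W g) (hu : u ∉ W) :
    Adapted (insert u W) (Function.update g u u) := by
  constructor
  · intro v hv
    rcases Finset.mem_insert.mp hv with rfl | hv
    · exact Function.update_self _ _ _
    · have hvu : v ≠ u := fun h => hu (h ▸ hv)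
      rw [Function.update_of_ne hvu]
      exact hA.1 v hv
  · intro v hv
    have hvu : v ≠ u := fun h => hv (h ▸ Finset.mem_insert_self u W)
    have hvW : v ∉ W := fun h => hv (Finset.mem_insert_of_mem h)
    rw [Function.update_of_ne hvu]
    exact hA.2 v hvW

lemma update_nocyc {W : Finset V} {g : V → V} {u : V} (hN : NoCyc W g) :
    NoCyc (insert u W) (Function.update g u u) := by
  set g' := Function.update g u u with hg'
  intro v hv m hm hit
  have hvu : v ≠ u := fun h => hv (h ▸ Finset.mem_insert_self u W)
  have hvW : v ∉ W := fun h => hv (Finset.mem_insert_of_mem h)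
  have havoid : ∀ k, k ≤ m → g'^[k] v ≠ u := by
    intro k hk hku
    have hmu : g'^[m] v = u := by
      have h5 : g'^[m] v = g'^[m - k] (g'^[k] v) := by
        rw [← Function.iterate_add_apply, Nat.sub_add_cancel hk]
      rw [h5, hku]
      exact Function.iterate_fixed (Function.update_self _ _ _) _
    rw [hit] at hmu
    exact hvu hmu
  have hsame : ∀ k, k ≤ m → g'^[k] v = g^[k] v := by
    intro k hk
    induction k with
    | zero => rfl
    | succ k ihk =>
      rw [Function.iterate_succ_apply', Function.iterate_succ_apply',
        ihk (by omega), ← ihk (by omega)]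
      exact Function.update_of_ne (havoid k (by omega)) _ _
  exact hN v hvW m hm (by rw [← hsame m (le_refl m)]; exact hit)

lemma card_compl_insert {W : Finset V} {u : V} (hu : u ∉ W) :
    (((insert u W)ᶜ : Finset V)).card + 1 = (Wᶜ : Finset V).card := by
  have h1 : ((insert u W) : Finset V).card = W.card + 1 := Finset.card_insert_of_notMem hu
  have h2 := Finset.card_compl (insert u W) (α := V)
  have h3 := Finset.card_compl W (α := V)
  have h5 : ((insert u W) : Finset V).card ≤ Fintype.card V := Finset.card_le_univ _
  omega

lemma phi_no_edge_at_source {W : Finset V} {g : V → V} {u : V}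
    (hsrc : ∀ x, x ∉ W → g x ≠ u) :
    ∀ e ∈ Phi (insert u W) (Function.update g u u), u ∉ e := by
  intro e he hue
  obtain ⟨x, hx, rfl⟩ := Finset.mem_image.mp he
  have hxu : x ≠ u := fun h => (Finset.mem_compl.mp hx) (h ▸ Finset.mem_insert_self u W)
  have hxW : x ∉ W := fun h => (Finset.mem_compl.mp hx) (Finset.mem_insert_of_mem h)
  rw [Function.update_of_ne hxu] at hue
  rcases Sym2.mem_iff.mp hue with h | h
  · exact hxu h.symm
  · exact hsrc x hxW h.symm

lemma grove_phi : ∀ (n : ℕ) (W : Finset V) (g : V → V), (Wᶜ : Finset V).card = n →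
    Adapted W g → NoCyc W g → Grove W (Phi W g) := by
  intro n
  induction n with
  | zero =>
    intro W g hcard _ _
    have hWc : (Wᶜ : Finset V) = ∅ := Finset.card_eq_zero.mp hcard
    have hW : W = Finset.univ := by
      rwa [← Finset.compl_eq_empty_iff]
    have hPhi : Phi W g = ∅ := by rw [Phi, hWc, Finset.image_empty]
    rw [hPhi]
    refine ⟨?_, ?_, ?_⟩
    · rw [ncomp_empty, hW, Finset.card_univ]
    · rw [Finset.card_empty, hW, Finset.card_univ, zero_add]
    · intro w _ w' _ hl
      exact linked_empty.mp hl
  | succ n ih =>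
    intro W g hcard hA hN
    have hne : (Wᶜ : Finset V).Nonempty := Finset.card_pos.mp (by omega)
    obtain ⟨u, hu, hsrc⟩ := exists_source hA hN hne
    set g' := Function.update g u u with hg'
    have hA' := update_adapted hA hu
    have hN' := update_nocyc (u := u) hN
    have hcard' : (((insert u W)ᶜ : Finset V)).card = n := by
      have := card_compl_insert (W := W) hu
      omega
    have hG' := ih (insert u W) g' hcard' hA' hN'
    have hdecomp : Phi W g = insert s(u, g u) (Phi (insert u W) g') := by
      rw [phi_decomp hu g, phi_image_congr (fun v hv => (Function.update_of_ne hv _ _).symm)]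
    have hiso := phi_no_edge_at_source (W := W) (g := g) hsrc
    have hnewnotmem : s(u, g u) ∉ Phi (insert u W) g' := by
      intro h
      exact hiso _ h (Sym2.mem_mk_left _ _)
    have hgu : g u ≠ u := hA.2 u hu
    have hnl : ¬ Linked (Phi (insert u W) g') u (g u) := by
      intro h
      exact hgu (isolated_not_linked hiso h).symm
    have hncomp := ncomp_insert_of_not_linked hnl
    have hucard : ((insert u W) : Finset V).card = W.card + 1 :=
      Finset.card_insert_of_notMem hu
    refine ⟨?_, ?_, ?_⟩
    · rw [hdecomp]
      have := hG'.1
      omega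
    · rw [hdecomp, Finset.card_insert_of_notMem hnewnotmem]
      have := hG'.2.1
      omega
    · intro w hw w' hw' hl
      rw [hdecomp, linked_insert_iff] at hl
      have hmem : ∀ x ∈ W, x ∈ insert u W := fun x hx => Finset.mem_insert_of_mem hx
      rcases hl with h | ⟨h1, h2⟩ | ⟨h1, h2⟩
      · exact hG'.2.2 w (hmem w hw) w' (hmem w' hw') h
      · exfalso
        have : w = u := hG'.2.2 w (hmem w hw) u (Finset.mem_insert_self u W) h1
        exact hu (this ▸ hw)
      · exfalso
        have : u = w' := isolated_not_linked hiso h2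
        exact hu (this ▸ hw')

lemma phi_injective : ∀ (n : ℕ) (W : Finset V) (g g' : V → V), (Wᶜ : Finset V).card = n →
    Adapted W g → NoCyc W g → Adapted W g' → NoCyc W g' → Phi W g = Phi W g' → g = g' := by
  intro n
  induction n with
  | zero =>
    intro W g g' hcard hA _ hA' _ _
    have hWc : (Wᶜ : Finset V) = ∅ := Finset.card_eq_zero.mp hcard
    have hW : W = Finset.univ := by rwa [← Finset.compl_eq_empty_iff]
    funext v
    have hv : v ∈ W := hW ▸ Finset.mem_univ v
    rw [hA.1 v hv, hA'.1 v hv]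
  | succ n ih =>
    intro W g g' hcard hA hN hA' hN' heq
    have hne : (Wᶜ : Finset V).Nonempty := Finset.card_pos.mp (by omega)
    obtain ⟨u, hu, hsrc⟩ := exists_source hA hN hne
    -- every edge of Phi W g containing u is s(u, g u)
    have hedges : ∀ e ∈ Phi W g, u ∈ e → e = s(u, g u) := by
      intro e he hue
      obtain ⟨x, hx, rfl⟩ := Finset.mem_image.mp he
      rcases Sym2.mem_iff.mp hue with h | h
      · rw [h]
      · exfalso
        exact hsrc x (Finset.mem_compl.mp hx) h.symm
    have huc : u ∈ (Wᶜ : Finset V) := Finset.mem_compl.mpr hu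
    -- g' u = g u
    have hgu' : g' u = g u := by
      have hmem : s(u, g' u) ∈ Phi W g := heq ▸ Finset.mem_image_of_mem _ huc
      have := hedges _ hmem (Sym2.mem_mk_left _ _)
      rcases Sym2.eq_iff.mp this with ⟨-, h2⟩ | ⟨h1, h2⟩
      · exact h2
      · rw [h2]
        exact h1
    -- u is also a source for g'
    have hsrc' : ∀ x, x ∉ W → g' x ≠ u := by
      intro x hxW hgx
      by_cases hxu : x = u
      · subst hxu
        exact hA'.2 x hxW hgx
      · have hmem : s(x, g' x) ∈ Phi W g :=
          heq ▸ Finset.mem_image_of_mem _ (Finset.mem_compl.mpr hxW)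
        have h5 := hedges _ hmem (hgx ▸ Sym2.mem_mk_right x (g' x))
        rcases Sym2.eq_iff.mp h5 with ⟨h1, -⟩ | ⟨h1, h2⟩
        · exact hxu h1
        · -- x = g u, g' x = u ; then g' has a 2-cycle at u
          have hcyc : g' (g' u) = u := by rw [hgu', ← h1, hgx]
          exact hN' u hu 2 (by norm_num) (iterate_two_eq hcyc)
    set h1 := Function.update g u u with hh1
    set h2 := Function.update g' u u with hh2
    have hcard' : (((insert u W)ᶜ : Finset V)).card = n := by
      have := card_compl_insert (W := W) hu
      omega
    have hphi1 : Phi W g = insert s(u, g u) (Phi (insert u W) h1) := by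
      rw [phi_decomp hu g, phi_image_congr (fun v hv => (Function.update_of_ne hv _ _).symm)]
    have hphi2 : Phi W g' = insert s(u, g' u) (Phi (insert u W) h2) := by
      rw [phi_decomp hu g', phi_image_congr (fun v hv => (Function.update_of_ne hv _ _).symm)]
    have hiso1 := phi_no_edge_at_source (W := W) (g := g) hsrc
    have hiso2 := phi_no_edge_at_source (W := W) (g := g') hsrc'
    have hnm1 : s(u, g u) ∉ Phi (insert u W) h1 :=
      fun h => hiso1 _ h (Sym2.mem_mk_left _ _)
    have hnm2 : s(u, g' u) ∉ Phi (insert u W) h2 :=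
      fun h => hiso2 _ h (Sym2.mem_mk_left _ _)
    have hsub : Phi (insert u W) h1 = Phi (insert u W) h2 := by
      have e1 : Phi (insert u W) h1 = (Phi W g).erase s(u, g u) := by
        rw [hphi1, Finset.erase_insert hnm1]
      have e2 : Phi (insert u W) h2 = (Phi W g').erase s(u, g' u) := by
        rw [hphi2, Finset.erase_insert hnm2]
      rw [e1, e2, heq, hgu']
    have hupd : h1 = h2 := ih (insert u W) h1 h2 hcard'
      (update_adapted hA hu) (update_nocyc hN)
      (update_adapted hA' hu) (update_nocyc hN') hsub
    funext v
    by_cases hvu : v = u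
    · subst hvu
      exact hgu'.symm
    · have := congrFun hupd v
      rwa [hh1, hh2, Function.update_of_ne hvu, Function.update_of_ne hvu] at this

lemma phi_surjective : ∀ (n : ℕ) (W : Finset V) (B : Finset (Sym2 V)),
    (Wᶜ : Finset V).card = n → Grove W B →
    ∃ g : V → V, Adapted W g ∧ NoCyc W g ∧ Phi W g = B := by
  intro n
  induction n with
  | zero =>
    intro W B hcard hG
    have hWc : (Wᶜ : Finset V) = ∅ := Finset.card_eq_zero.mp hcard
    have hW : W = Finset.univ := by rwa [← Finset.compl_eq_empty_iff]
    have hB : B = ∅ := by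
      have h1 := hG.2.1
      rw [hW, Finset.card_univ] at h1
      exact Finset.card_eq_zero.mp (by omega)
    refine ⟨id, ⟨fun v _ => rfl, fun v hv => absurd (hW ▸ Finset.mem_univ v) hv⟩,
      fun v hv => absurd (hW ▸ Finset.mem_univ v) hv, ?_⟩
    rw [Phi, hWc, Finset.image_empty, hB]
  | succ n ih =>
    intro W B hcard hG
    have hne : ∃ v : V, v ∉ W := by
      have : (Wᶜ : Finset V).Nonempty := Finset.card_pos.mp (by omega)
      obtain ⟨v, hv⟩ := this
      exact ⟨v, Finset.mem_compl.mp hv⟩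
    obtain ⟨u, hu, z, hzu, hez, huniq⟩ := grove_exists_leaf hG hne
    have hI := grove_independent hG
    set B' := B.erase s(u, z) with hB'
    have hiso : ∀ e ∈ B', u ∉ e := by
      intro e he hue
      have heB : e ∈ B := Finset.mem_of_mem_erase he
      have := huniq e heB hue
      exact (Finset.mem_erase.mp he).1 this
    have hinsB : insert s(u, z) B' = B := Finset.insert_erase hez
    have hnlB' : ¬ Linked B' u z := hI u z hez
    have hncomp := ncomp_insert_of_not_linked hnlB'
    rw [hinsB] at hncomp
    have hucard : ((insert u W) : Finset V).card = W.card + 1 :=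
      Finset.card_insert_of_notMem hu
    have hG' : Grove (insert u W) B' := by
      refine ⟨?_, ?_, ?_⟩
      · have := hG.1
        omega
      · have h1 : B'.card + 1 = B.card := Finset.card_erase_add_one hez
        have := hG.2.1
        omega
      · intro a ha b hb hl
        rcases Finset.mem_insert.mp ha with rfl | haW
        · exact (isolated_not_linked hiso hl)
        · rcases Finset.mem_insert.mp hb with rfl | hbW
          · exact (isolated_not_linked hiso (linked_symm hl)).symm
          · exact hG.2.2 a haW b hbW (linked_mono (Finset.erase_subset _ _) hl)
    have hcard' : (((insert u W)ᶜ : Finset V)).card = n := by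
      have := card_compl_insert (W := W) hu
      omega
    obtain ⟨g', hA', hN', hPhi'⟩ := ih (insert u W) B' hcard' hG'
    set g := Function.update g' u z with hg
    have hgvals : ∀ v, v ≠ u → g v = g' v := fun v hv => Function.update_of_ne hv _ _
    have hgu : g u = z := Function.update_self _ _ _
    have hA2 : Adapted W g := by
      constructor
      · intro v hv
        have hvu : v ≠ u := fun h => hu (h ▸ hv)
        rw [hgvals v hvu]
        exact hA'.1 v (Finset.mem_insert_of_mem hv)
      · intro v hv
        by_cases hvu : v = u
        · subst hvu
          rw [hgu]
          exact Ne.symm (fun h => hzu h.symm)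
        · rw [hgvals v hvu]
          exact hA'.2 v (fun h => (by
            rcases Finset.mem_insert.mp h with h1 | h1
            · exact hvu h1
            · exact hv h1))
      -- careful
    have hnopre : ∀ x : V, g x ≠ u := by
      intro x hgx
      by_cases hxu : x = u
      · subst hxu
        rw [hgu] at hgx
        exact hzu hgx
      · rw [hgvals x hxu] at hgx
        by_cases hxW : x ∈ insert u W
        · have := hA'.1 x hxW
          rw [this] at hgx
          exact hxu hgx
        · have hmem : s(x, g' x) ∈ B' := hPhi' ▸ Finset.mem_image_of_mem _
            (Finset.mem_compl.mpr hxW)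
          exact hiso _ hmem (hgx ▸ Sym2.mem_mk_right x (g' x))
    have hN2 : NoCyc W g := by
      intro v hv m hm hit
      have hvu : v ≠ u := by
        intro h
        subst h
        have h5 : g^[m] v = g (g^[m - 1] v) := by
          conv_lhs => rw [show m = (m - 1) + 1 by omega]
          rw [Function.iterate_succ_apply']
        rw [hit] at h5
        exact hnopre _ h5.symm
      have havoid : ∀ k, g^[k] v ≠ u := by
        intro k
        rcases Nat.eq_zero_or_pos k with rfl | hk
        · exact hvu
        · rw [show k = (k - 1) + 1 by omega, Function.iterate_succ_apply']
          exact hnopre _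
      have hsame : ∀ k, g^[k] v = g'^[k] v := by
        intro k
        induction k with
        | zero => rfl
        | succ k ihk =>
          rw [Function.iterate_succ_apply', Function.iterate_succ_apply', ← ihk]
          exact (hgvals _ (havoid k))
      have hvW' : v ∉ insert u W := by
        intro h
        rcases Finset.mem_insert.mp h with h1 | h1
        · exact hvu h1
        · exact hv h1
      exact hN' v hvW' m hm (by rw [← hsame m]; exact hit)
    refine ⟨g, hA2, hN2, ?_⟩
    rw [phi_decomp hu g, phi_image_congr (g' := g') hgvals, hPhi', hgu, hinsB]

lemma sum_nocyc_eq_groves (c : Sym2 V → ℝ) (W : Finset V) :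
    ∑ g ∈ (Finset.univ : Finset (V → V)).filter (fun g => Adapted W g ∧ NoCyc W g),
      (∏ v ∈ (Wᶜ : Finset V), c s(v, g v))
    = ∑ B ∈ (Finset.univ : Finset (Finset (Sym2 V))).filter (Grove W), wt c B := by
  classical
  apply Finset.sum_bij (fun g _ => Phi W g)
  · intro g hg
    have h1 := Finset.mem_filter.mp hg
    exact Finset.mem_filter.mpr ⟨Finset.mem_univ _, grove_phi _ W g rfl h1.2.1 h1.2.2⟩
  · intro g1 hg1 g2 hg2 h
    have h1 := Finset.mem_filter.mp hg1
    have h2 := Finset.mem_filter.mp hg2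
    exact phi_injective _ W g1 g2 rfl h1.2.1 h1.2.2 h2.2.1 h2.2.2 h
  · intro B hB
    obtain ⟨g, hA, hN, hPhi⟩ := phi_surjective _ W B rfl (Finset.mem_filter.mp hB).2
    exact ⟨g, Finset.mem_filter.mpr ⟨Finset.mem_univ _, hA, hN⟩, hPhi⟩
  · intro g hg
    exact (wt_phi (Finset.mem_filter.mp hg).2.2 c).symm

lemma mtt (c : Sym2 V → ℝ) (W : Finset V) :
    (lapW c W).det = ∑ B ∈ (Finset.univ : Finset (Finset (Sym2 V))).filter (Grove W), wt c B := by
  classical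
  rw [det_lapW, ← sum_nocyc_eq_groves]
  have h1 : ∀ g ∈ (Finset.univ : Finset (V → V)).filter (Adapted W),
      (∏ v ∈ (Wᶜ : Finset V), c s(v, g v)) * (fmat W g).det
      = if NoCyc W g then (∏ v ∈ (Wᶜ : Finset V), c s(v, g v)) else 0 := by
    intro g hg
    have hA := (Finset.mem_filter.mp hg).2
    by_cases hN : NoCyc W g
    · rw [if_pos hN, det_fmat_nocyc ((Wᶜ : Finset V).card) W g rfl hA hN, mul_one]
    · rw [if_neg hN, det_fmat_cyc hA hN, mul_zero]
  rw [Finset.sum_congr rfl h1, ← Finset.sum_filter, Finset.filter_filter]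


lemma grove_singleton (b : V) (B : Finset (Sym2 V)) : Grove {b} B ↔ IsSF 1 B := by
  constructor
  · intro h
    refine ⟨?_, ?_⟩
    · rw [h.1, Finset.card_singleton]
    · have := h.2.1
      rwa [Finset.card_singleton] at this
  · intro h
    refine ⟨?_, ?_, ?_⟩
    · rw [Finset.card_singleton, h.1]
    · rw [Finset.card_singleton]
      exact h.2
    · intro w hw w' hw' _
      rw [Finset.mem_singleton.mp hw, Finset.mem_singleton.mp hw']

lemma mem_floating {b u : V} {B : Finset (Sym2 V)} :
    u ∈ floating b B ↔ ¬ Linked B b u := by simp [floating]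

lemma grove_pair {b u : V} (hu : u ≠ b) (B : Finset (Sym2 V)) :
    Grove {b, u} B ↔ (IsSF 2 B ∧ u ∈ floating b B) := by
  have hbu : b ≠ u := Ne.symm hu
  have hcard : ({b, u} : Finset V).card = 2 := Finset.card_pair hbu
  constructor
  · intro h
    refine ⟨⟨?_, ?_⟩, ?_⟩
    · rw [h.1, hcard]
    · have := h.2.1
      rwa [hcard] at this
    · rw [mem_floating]
      intro hl
      exact hbu (h.2.2 b (Finset.mem_insert_self _ _) u
        (Finset.mem_insert_of_mem (Finset.mem_singleton_self u)) hl)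
  · rintro ⟨⟨h1, h2⟩, h3⟩
    rw [mem_floating] at h3
    refine ⟨?_, ?_, ?_⟩
    · rw [hcard, h1]
    · rw [hcard]
      exact h2
    · intro w hw w' hw' hl
      rcases Finset.mem_insert.mp hw with rfl | hw
      · rcases Finset.mem_insert.mp hw' with rfl | hw'
        · rfl
        · rw [Finset.mem_singleton.mp hw'] at hl ⊢
          exact absurd hl h3
      · rw [Finset.mem_singleton.mp hw] at hl ⊢
        rcases Finset.mem_insert.mp hw' with rfl | hw'
        · exact absurd (linked_symm hl) h3
        · rw [Finset.mem_singleton.mp hw']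

lemma det_dlap_eq (c : Sym2 V → ℝ) (b : V) :
    (dlap c b).det = (lapW c {b}).det := by
  let e : {w : V // w ≠ b} ≃ {v : V // v ∉ ({b} : Finset V)} :=
    { toFun := fun p => ⟨p.1, by simp [p.2]⟩
      invFun := fun p => ⟨p.1, by simpa using p.2⟩
      left_inv := fun p => rfl
      right_inv := fun p => rfl }
  have h : (lapW c {b}).submatrix e e = dlap c b := by
    ext p q
    rfl
  rw [← h, Matrix.det_submatrix_equiv_self]

lemma adjugate_dlap_eq (c : Sym2 V → ℝ) {b u : V} (hu : u ≠ b) :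
    (dlap c b).adjugate ⟨u, hu⟩ ⟨u, hu⟩ = (lapW c {b, u}).det := by
  classical
  set u0 : {w : V // w ≠ b} := ⟨u, hu⟩ with hu0
  set M := (dlap c b).updateRow u0 (Pi.single u0 1) with hM
  have h0 : ∀ x, x ≠ u0 → M u0 x = 0 := by
    intro x hx
    rw [hM, Matrix.updateRow_self]
    apply Pi.single_eq_of_ne hx
  have h1 : M u0 u0 = 1 := by
    rw [hM, Matrix.updateRow_self]
    exact Pi.single_eq_same _ _
  rw [Matrix.adjugate_apply, ← hM, det_eq_det_of_unit_row M u0 h0 h1]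
  let e : {x : {w : V // w ≠ b} // x ≠ u0} ≃ {v : V // v ∉ ({b, u} : Finset V)} :=
    { toFun := fun p => ⟨p.1.1, by
        intro h
        rcases Finset.mem_insert.mp h with h | h
        · exact p.1.2 h
        · exact p.2 (Subtype.ext (Finset.mem_singleton.mp h))⟩
      invFun := fun p => ⟨⟨p.1, fun h => p.2 (by rw [h]; exact Finset.mem_insert_self b {u})⟩,
        fun h => p.2 (by
          have : p.1 = u := congrArg Subtype.val h
          rw [this]
          exact Finset.mem_insert_of_mem (Finset.mem_singleton_self u))⟩
      left_inv := fun p => by ext; rfl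
      right_inv := fun p => rfl }
  have h : (lapW c {b, u}).submatrix e e
      = M.submatrix (fun p : {x : {w : V // w ≠ b} // x ≠ u0} => (p : {w : V // w ≠ b}))
        (fun p : {x : {w : V // w ≠ b} // x ≠ u0} => (p : {w : V // w ≠ b})) := by
    ext p q
    rw [Matrix.submatrix_apply, Matrix.submatrix_apply, hM,
      Matrix.updateRow_ne p.2]
    rfl
  rw [← Matrix.det_submatrix_equiv_self e (lapW c {b, u}), h]

lemma kappa1_eq_det (c : Sym2 V → ℝ) (b : V) : kappa1 c = (dlap c b).det := by
  rw [det_dlap_eq, mtt, kappa1]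
  apply Finset.sum_congr _ (fun _ _ => rfl)
  apply Finset.filter_congr
  intro B _
  exact (grove_singleton b B).symm

lemma floating_sum_eq_det (c : Sym2 V → ℝ) {b u : V} (hu : u ≠ b) :
    (∑ B ∈ Finset.univ.filter (fun B => IsSF 2 B ∧ u ∈ floating b B), wt c B)
      = (lapW c {b, u}).det := by
  rw [mtt]
  apply Finset.sum_congr _ (fun _ _ => rfl)
  apply Finset.filter_congr
  intro B _
  exact (grove_pair hu B).symm

lemma kappa1_pos (c : Sym2 V → ℝ) (hc : ∀ e, 0 ≤ c e)
    (hconn : ncomp (Finset.univ.filter fun e : Sym2 V => c e ≠ 0) = 1) :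
    0 < kappa1 c := by
  classical
  set E0 := Finset.univ.filter fun e : Sym2 V => c e ≠ 0 with hE0
  obtain ⟨T, hT1, hT2, hT3⟩ := exists_spanning E0
  have hn : ncomp T = 1 := by
    rw [ncomp_congr hT3]
    exact hconn
  have hsf : IsSF 1 T := ⟨hn, by
    have := independent_card hT2
    omega⟩
  have hwt : 0 < wt c T := by
    apply Finset.prod_pos
    intro e he
    have : c e ≠ 0 := (Finset.mem_filter.mp (hT1 he)).2
    exact lt_of_le_of_ne (hc e) (Ne.symm this)
  apply Finset.sum_pos'
  · intro B _
    exact Finset.prod_nonneg (fun e _ => hc e)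
  · exact ⟨T, Finset.mem_filter.mpr ⟨Finset.mem_univ _, hsf⟩, hwt⟩

theorem statement_3' (c : Sym2 V → ℝ)
    (hc : ∀ e, 0 ≤ c e) (hloop : ∀ v : V, c s(v, v) = 0)
    (hconn : ncomp (Finset.univ.filter fun e : Sym2 V => c e ≠ 0) = 1)
    (b u : V) (hu : u ≠ b) :
    pr2 c (fun B => u ∈ floating b B) = kappa1 c / kappa2 c * green c b u u := by
  classical
  have hk1 : kappa1 c = (dlap c b).det := kappa1_eq_det c b
  have hk1pos := kappa1_pos c hc hconn
  have hk1ne : kappa1 c ≠ 0 := ne_of_gt hk1pos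
  have hdetne : (dlap c b).det ≠ 0 := hk1 ▸ hk1ne
  have hgreen : green c b u u = (kappa1 c)⁻¹ *
      (∑ B ∈ Finset.univ.filter (fun B => IsSF 2 B ∧ u ∈ floating b B), wt c B) := by
    rw [green, dif_neg hu, dif_neg hu, Matrix.inv_def, Matrix.smul_apply,
      Ring.inverse_eq_inv', smul_eq_mul, floating_sum_eq_det c hu,
      ← adjugate_dlap_eq c hu, hk1]
  rw [pr2, hgreen]
  rw [div_mul_eq_mul_div, ← mul_assoc, mul_inv_cancel₀ hk1ne, one_mul]
  congr 1
  apply Finset.sum_congr _ (fun _ _ => rfl)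
  exact Finset.filter_congr_decidable _ _ _

end Proof

end TwoSF

open TwoSF

/-- For a finite connected undirected graph with positive
conductances (`c` vanishes exactly off the edge set, and there are no loops)
and marked vertex `b`, the probability that a vertex `u ≠ b` lies in the
floating component `Σ` of a weight-proportional random two-component spanning
forest equals `(κ/κ₂) · G_{u,u}`. -/
theorem statement_3 {V : Type*} [Fintype V] [DecidableEq V] (c : Sym2 V → ℝ)
    (hc : ∀ e, 0 ≤ c e) (hloop : ∀ v : V, c s(v, v) = 0)
    (hconn : ncomp (Finset.univ.filter fun e : Sym2 V => c e ≠ 0) = 1)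
    (b u : V) (hu : u ≠ b) :
    pr2 c (fun B => u ∈ floating b B) = kappa1 c / kappa2 c * green c b u u :=
  TwoSF.statement_3' c hc hloop hconn b u hu
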